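/- For (θ, φ) uniform on the sphere, E(Ω²) = ∫₀¹ η·arctan((4/3)η)²/√(1 - η²) dη, where Ω = arctan((4/3)√(1 - sin(θ)² sin(φ)²)). -/

import Mathlib

open Real MeasureTheory Set intervalIntegral

noncomputable def hh (y : ℝ) : ℝ := arctan ((4 / 3) * Real.sqrt (1 - y ^ 2)) ^ 2

lemma hh_cont : Continuous hh := by
  exact (Real.continuous_arctan.comp (continuous_const.mul ((continuous_const.sub (continuous_pow 2)).sqrt))).pow 2

lemma hh_nonneg (y : ℝ) : 0 ≤ hh y := sq_nonneg _

-- image set lemmas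
lemma img_sin : Real.sin '' Ioo 0 (π / 2) = Ioo 0 1 := by
  ext u
  constructor
  · rintro ⟨t, ht, rfl⟩
    refine ⟨Real.sin_pos_of_pos_of_lt_pi ht.1 (ht.2.trans (by linarith [pi_pos])), ?_⟩
    have := Real.strictMonoOn_sin (by constructor <;> [linarith [pi_pos, ht.1]; linarith [ht.2]] :
      t ∈ Icc (-(π/2)) (π/2)) (by constructor <;> linarith [pi_pos] : (π/2 : ℝ) ∈ Icc (-(π/2)) (π/2)) ht.2
    simpa using this
  · rintro ⟨h1, h2⟩
    refine ⟨Real.arcsin u, ⟨Real.arcsin_pos.2 h1, Real.arcsin_lt_pi_div_two.2 h2⟩,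
      Real.sin_arcsin (by linarith) (by linarith)⟩

lemma img_cos : Real.cos '' Ioo 0 (π / 2) = Ioo 0 1 := by
  ext u
  constructor
  · rintro ⟨t, ht, rfl⟩
    refine ⟨Real.cos_pos_of_mem_Ioo ⟨by linarith [ht.1, pi_pos], ht.2⟩, ?_⟩
    have := Real.strictAntiOn_cos (by constructor <;> linarith [pi_pos] : (0:ℝ) ∈ Icc 0 π)
      (by constructor <;> [linarith [ht.1]; linarith [ht.2, pi_pos]] : t ∈ Icc 0 π) ht.1
    simpa using this
  · rintro ⟨h1, h2⟩
    refine ⟨Real.arccos u, ⟨Real.arccos_pos.2 h2, Real.arccos_lt_pi_div_two.2 h1⟩,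
      Real.cos_arccos (by linarith) (by linarith)⟩

lemma img_asin {a : ℝ} (ha : 0 < a) :
    (fun s => a * Real.sin s) '' Ioo (-(π / 2)) (π / 2) = Ioo (-a) a := by
  ext u
  constructor
  · rintro ⟨t, ht, rfl⟩
    have h1 : Real.sin t < 1 := by
      have := Real.strictMonoOn_sin (⟨le_of_lt ht.1, ht.2.le⟩ : t ∈ Icc (-(π/2)) (π/2))
        (by constructor <;> linarith [pi_pos] : (π/2 : ℝ) ∈ Icc (-(π/2)) (π/2)) ht.2
      simpa using this
    have h2 : -1 < Real.sin t := by
      have := Real.strictMonoOn_sin (by constructor <;> linarith [pi_pos] : (-(π/2) : ℝ) ∈ Icc (-(π/2)) (π/2))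
        (⟨le_of_lt ht.1, ht.2.le⟩ : t ∈ Icc (-(π/2)) (π/2)) ht.1
      simpa using this
    simp only []
    constructor <;> nlinarith
  · rintro ⟨h1, h2⟩
    have hd1 : -1 < u / a := by rw [lt_div_iff₀ ha]; linarith
    have hd2 : u / a < 1 := by rw [div_lt_one ha]; linarith
    refine ⟨Real.arcsin (u / a), ⟨Real.neg_pi_div_two_lt_arcsin.2 hd1, Real.arcsin_lt_pi_div_two.2 hd2⟩, ?_⟩
    simp only []
    rw [Real.sin_arcsin (by linarith) (by linarith)]
    field_simp

lemma key1 {a : ℝ} (ha : 0 < a) :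
    IntegrableOn (fun x => (Real.sqrt (a ^ 2 - x ^ 2))⁻¹) (Ioo (-a) a) ∧
      ∫ x in Ioo (-a) a, (Real.sqrt (a ^ 2 - x ^ 2))⁻¹ = π := by
  have hinj : InjOn (fun s => a * Real.sin s) (Ioo (-(π/2)) (π/2)) := by
    intro x hx y hy hxy
    exact Real.injOn_sin (mem_Icc.2 ⟨hx.1.le, hx.2.le⟩) (mem_Icc.2 ⟨hy.1.le, hy.2.le⟩)
      (mul_left_cancel₀ ha.ne' (by simpa using hxy))
  have hderiv : ∀ s ∈ Ioo (-(π/2)) (π/2),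
      HasDerivWithinAt (fun s => a * Real.sin s) (a * Real.cos s) (Ioo (-(π/2)) (π/2)) s :=
    fun s _ => ((Real.hasDerivAt_sin s).const_mul a).hasDerivWithinAt
  have heq : EqOn (fun s => |a * Real.cos s| • (Real.sqrt (a ^ 2 - (a * Real.sin s) ^ 2))⁻¹)
      (fun _ => (1:ℝ)) (Ioo (-(π/2)) (π/2)) := by
    intro s hs
    have hc : 0 < Real.cos s := Real.cos_pos_of_mem_Ioo hs
    have h1 : Real.sqrt (a ^ 2 - (a * Real.sin s) ^ 2) = a * Real.cos s := by
      have : a ^ 2 - (a * Real.sin s) ^ 2 = (a * Real.cos s) ^ 2 := by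
        rw [mul_pow, mul_pow]; nlinarith [Real.sin_sq_add_cos_sq s]
      rw [this, Real.sqrt_sq (by positivity)]
    simp only [h1, smul_eq_mul, abs_of_pos (by positivity : (0:ℝ) < a * Real.cos s)]
    field_simp
  constructor
  · rw [← img_asin ha,
      integrableOn_image_iff_integrableOn_abs_deriv_smul measurableSet_Ioo hderiv hinj]
    exact (integrableOn_const (C := (1:ℝ)) measure_Ioo_lt_top.ne).congr_fun
      (fun s hs => (heq hs).symm) measurableSet_Ioo
  · rw [← img_asin ha,
      integral_image_eq_integral_abs_deriv_smul measurableSet_Ioo hderiv hinj,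
      setIntegral_congr_fun measurableSet_Ioo heq]
    simp only [setIntegral_const, smul_eq_mul, mul_one, Real.volume_Ioo]
    rw [measureReal_def, Real.volume_Ioo, show (π/2 : ℝ) - -(π/2) = π by ring, ENNReal.toReal_ofReal Real.pi_pos.le]

noncomputable def gg (p : ℝ × ℝ) : ℝ :=
  if p.1 ^ 2 + p.2 ^ 2 < 1 then hh p.1 / Real.sqrt (1 - p.1 ^ 2 - p.2 ^ 2) else 0

lemma gg_meas : Measurable gg := by
  unfold gg
  exact Measurable.ite
    (measurableSet_lt (by fun_prop) measurable_const)
    ((hh_cont.comp continuous_fst).measurable.div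
      ((Continuous.measurable (by fun_prop : Continuous fun p : ℝ × ℝ => Real.sqrt (1 - p.1 ^ 2 - p.2 ^ 2)))))
    measurable_const

lemma gg_nonneg (p : ℝ × ℝ) : 0 ≤ gg p := by
  unfold gg; split
  · exact div_nonneg (hh_nonneg _) (Real.sqrt_nonneg _)
  · exact le_refl _

lemma gg_slice (y : ℝ) :
    Integrable (fun x => gg (y, x)) ∧
      (∫ x, gg (y, x)) = if y ^ 2 < 1 then hh y * π else 0 := by
  by_cases hy : y ^ 2 < 1
  · have h1 : (0:ℝ) < 1 - y ^ 2 := by linarith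
    set a := Real.sqrt (1 - y ^ 2) with hadef
    have ha : 0 < a := Real.sqrt_pos.2 h1
    have ha2 : a ^ 2 = 1 - y ^ 2 := Real.sq_sqrt h1.le
    have funeq : (fun x => gg (y, x))
        = (Ioo (-a) a).indicator (fun x => hh y * (Real.sqrt (a ^ 2 - x ^ 2))⁻¹) := by
      funext x
      have hiff : (y ^ 2 + x ^ 2 < 1) ↔ x ∈ Ioo (-a) a := by
        simp only [mem_Ioo]
        constructor
        · intro h; constructor <;> nlinarith
        · rintro ⟨h2, h3⟩; nlinarith
      by_cases hx : x ∈ Ioo (-a) a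
      · rw [indicator_of_mem hx]
        simp only [gg, hiff.2 hx, if_true]
        rw [show (1 : ℝ) - y ^ 2 - x ^ 2 = a ^ 2 - x ^ 2 by rw [ha2], div_eq_mul_inv]
      · rw [indicator_of_notMem hx]
        simp only [gg, fun h => hx (hiff.1 h), if_neg (fun h => hx (hiff.1 h))]
    rw [funeq, if_pos hy]
    constructor
    · rw [integrable_indicator_iff measurableSet_Ioo]
      exact ((key1 ha).1.const_mul _)
    · rw [MeasureTheory.integral_indicator measurableSet_Ioo, MeasureTheory.integral_const_mul, (key1 ha).2]
  · have funeq : (fun x => gg (y, x)) = fun _ => (0:ℝ) := by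
      funext x
      simp only [gg]
      rw [if_neg (by intro h; exact hy (by nlinarith))]
    rw [funeq, if_neg hy]
    exact ⟨by simpa using integrable_zero ℝ ℝ (volume : Measure ℝ), by simp⟩

lemma MM_eq : (fun y => ∫ x, ‖gg (y, x)‖)
    = (Ioo (-1:ℝ) 1).indicator (fun y => hh y * π) := by
  funext y
  have hnorm : (fun x => ‖gg (y, x)‖) = fun x => gg (y, x) := by
    funext x; exact Real.norm_of_nonneg (gg_nonneg _)
  rw [hnorm, (gg_slice y).2]
  by_cases hy : y ^ 2 < 1
  · rw [if_pos hy, indicator_of_mem (by simp only [mem_Ioo]; constructor <;> nlinarith)]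
  · rw [if_neg hy, indicator_of_notMem ?_]
    simp only [mem_Ioo, not_and_or]
    rcases le_or_gt 1 y with h | h
    · exact Or.inr (not_lt.2 h)
    · rcases le_or_gt y (-1) with h' | h'
      · exact Or.inl (not_lt.2 h')
      · exact absurd (by nlinarith) hy

lemma gg_int : Integrable gg := by
  rw [MeasureTheory.Measure.volume_eq_prod ℝ ℝ]
  rw [integrable_prod_iff (gg_meas.aestronglyMeasurable)]
  refine ⟨Filter.Eventually.of_forall (fun y => (gg_slice y).1), ?_⟩
  rw [MM_eq]
  rw [integrable_indicator_iff measurableSet_Ioo]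
  exact ((hh_cont.mul continuous_const).integrableOn_Icc).mono_set Ioo_subset_Icc_self

lemma gg_val : (∫ p, gg p) = π * ∫ y in Ioo (-1:ℝ) 1, hh y := by
  rw [MeasureTheory.Measure.volume_eq_prod ℝ ℝ]
  rw [MeasureTheory.integral_prod _ (by rw [← MeasureTheory.Measure.volume_eq_prod ℝ ℝ]; exact gg_int)]
  have : (fun y => ∫ x, gg (y, x)) = (Ioo (-1:ℝ) 1).indicator (fun y => hh y * π) := by
    rw [← MM_eq]; funext y
    congr 1; funext x; exact (Real.norm_of_nonneg (gg_nonneg _)).symm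
  rw [this, MeasureTheory.integral_indicator measurableSet_Ioo]
  rw [show (fun y => hh y * π) = fun y => π * hh y from funext fun y => mul_comm _ _, MeasureTheory.integral_const_mul]

noncomputable def GG (c : ℝ) : ℝ := ∫ θ in Ioo (-π) π, hh (c * Real.cos θ)

lemma GG_interval (c : ℝ) : GG c = ∫ θ in (-π)..π, hh (c * Real.cos θ) := by
  rw [intervalIntegral.integral_of_le (by linarith [pi_pos]),
    MeasureTheory.integral_Ioc_eq_integral_Ioo]
  rfl

lemma GG_cont : Continuous GG := by
  have : Continuous fun c : ℝ => ∫ θ in (-π)..π, hh (c * Real.cos θ) := by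
    apply continuous_parametric_intervalIntegral_of_continuous'
    exact hh_cont.comp (continuous_fst.mul (Real.continuous_cos.comp continuous_snd))
  simpa [← GG_interval] using this

lemma L1 (c : ℝ) : (∫ θ in (0:ℝ)..(2 * π), hh (Real.sin θ * c)) = GG c := by
  have per : Function.Periodic (fun θ => hh (Real.sin θ * c)) (2 * π) := fun x => by
    simp [Real.sin_add_two_pi]
  have h1 : (∫ θ in (0:ℝ)..(2 * π), hh (Real.sin θ * c))
      = ∫ θ in (-(π/2))..(-(π/2) + 2 * π), hh (Real.sin θ * c) := by
    simpa using per.intervalIntegral_add_eq 0 (-(π/2))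
  have h2 : (∫ θ in (-π)..π, hh (Real.sin (θ + π/2) * c))
      = ∫ θ in (-(π/2))..(-(π/2) + 2 * π), hh (Real.sin θ * c) := by
    rw [intervalIntegral.integral_comp_add_right (fun θ => hh (Real.sin θ * c)) (π/2)]
    congr 1 <;> ring
  have h3 : (∫ θ in (-π)..π, hh (Real.sin (θ + π/2) * c))
      = ∫ θ in (-π)..π, hh (c * Real.cos θ) := by
    apply intervalIntegral.integral_congr
    intro θ _
    simp only []
    rw [Real.sin_add_pi_div_two, mul_comm]
  rw [h1, ← h2, h3, GG_interval]

lemma even_split : (∫ y in Ioo (-1:ℝ) 1, hh y) = 2 * ∫ y in Ioo (0:ℝ) 1, hh y := by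
  have hint : ∀ a b : ℝ, IntervalIntegrable hh volume a b :=
    fun a b => hh_cont.intervalIntegrable a b
  have h1 : (∫ y in Ioo (-1:ℝ) 1, hh y) = ∫ y in (-1:ℝ)..1, hh y := by
    rw [intervalIntegral.integral_of_le (by norm_num),
      MeasureTheory.integral_Ioc_eq_integral_Ioo]
  have h2 : (∫ y in Ioo (0:ℝ) 1, hh y) = ∫ y in (0:ℝ)..1, hh y := by
    rw [intervalIntegral.integral_of_le (by norm_num),
      MeasureTheory.integral_Ioc_eq_integral_Ioo]
  have h3 : (∫ y in (-1:ℝ)..0, hh y) = ∫ y in (0:ℝ)..1, hh y := by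
    rw [show (∫ y in (-1:ℝ)..0, hh y) = ∫ y in (-(1:ℝ))..(-0:ℝ), hh y by norm_num,
      ← intervalIntegral.integral_comp_neg hh]
    apply intervalIntegral.integral_congr
    intro y _
    simp [hh, neg_sq]
  rw [h1, h2, ← intervalIntegral.integral_add_adjacent_intervals (hint (-1) 0) (hint 0 1), h3]
  ring


lemma polar_step :
    (∫ r in Ioo (0:ℝ) 1, (r / Real.sqrt (1 - r ^ 2)) * GG r) = ∫ p, gg p := by
  rw [← integral_comp_polarCoord_symm gg]
  set B : ℝ × ℝ → ℝ × ℝ →L[ℝ] ℝ × ℝ := fun p =>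
    LinearMap.toContinuousLinearMap (Matrix.toLin (Module.Basis.finTwoProd ℝ) (Module.Basis.finTwoProd ℝ)
      !![Real.cos p.2, -p.1 * Real.sin p.2; Real.sin p.2, p.1 * Real.cos p.2]) with hB
  have B_det : ∀ p, (B p).det = p.1 := by
    intro p
    conv_rhs => rw [← one_mul p.1, ← Real.cos_sq_add_sin_sq p.2]
    simp only [hB, neg_mul, LinearMap.det_toContinuousLinearMap, LinearMap.det_toLin,
      Matrix.det_fin_two_of, sub_neg_eq_add]
    ring
  -- integrability on target
  have hmt : MeasurableSet polarCoord.target := polarCoord.open_target.measurableSet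
  have hint : IntegrableOn (fun p : ℝ × ℝ => p.1 • gg (polarCoord.symm p)) polarCoord.target := by
    have h1 : IntegrableOn gg (polarCoord.symm '' polarCoord.target) := gg_int.integrableOn
    rw [integrableOn_image_iff_integrableOn_abs_det_fderiv_smul volume hmt
      (fun p _ => (hasFDerivAt_polarCoord_symm p).hasFDerivWithinAt)
      (polarCoord.symm.injOn) gg] at h1
    refine h1.congr_fun (fun p hp => ?_) hmt
    rw [polarCoord_target] at hp
    simp only [← hB, B_det, det_fderivPolarCoordSymm]
    rw [abs_of_pos (mem_Ioi.1 hp.1)]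
  have point : ∀ r θ : ℝ, r • gg (polarCoord.symm (r, θ))
      = if r ^ 2 < 1 then (r / Real.sqrt (1 - r ^ 2)) * hh (r * Real.cos θ) else 0 := by
    intro r θ
    rw [polarCoord_symm_apply]
    simp only [gg]
    have e1 : (r * Real.cos θ) ^ 2 + (r * Real.sin θ) ^ 2 = r ^ 2 := by
      nlinarith [Real.sin_sq_add_cos_sq θ]
    have e2 : (1:ℝ) - (r * Real.cos θ) ^ 2 - (r * Real.sin θ) ^ 2 = 1 - r ^ 2 := by linarith
    rw [e1, e2, smul_eq_mul, mul_ite, mul_zero]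
    split_ifs with hc
    · ring
    · rfl
  have inner_eq : ∀ r : ℝ, (∫ θ in Ioo (-π) π, r • gg (polarCoord.symm (r, θ)))
      = if r ^ 2 < 1 then (r / Real.sqrt (1 - r ^ 2)) * GG r else 0 := by
    intro r
    by_cases hr : r ^ 2 < 1
    · rw [if_pos hr]
      calc (∫ θ in Ioo (-π) π, r • gg (polarCoord.symm (r, θ)))
          = ∫ θ in Ioo (-π) π, (r / Real.sqrt (1 - r ^ 2)) * hh (r * Real.cos θ) := by
            refine setIntegral_congr_fun measurableSet_Ioo (fun θ _ => ?_)
            rw [point r θ, if_pos hr]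
        _ = (r / Real.sqrt (1 - r ^ 2)) * GG r := by
            rw [MeasureTheory.integral_const_mul]; rfl
    · rw [if_neg hr]
      have : ∀ θ : ℝ, r • gg (polarCoord.symm (r, θ)) = 0 := fun θ => by
        rw [point r θ, if_neg hr]
      simp only [this, MeasureTheory.integral_zero]
  calc (∫ r in Ioo (0:ℝ) 1, (r / Real.sqrt (1 - r ^ 2)) * GG r)
      = ∫ r in Ioo (0:ℝ) 1, (if r ^ 2 < 1 then (r / Real.sqrt (1 - r ^ 2)) * GG r else 0) := by
        refine (setIntegral_congr_fun measurableSet_Ioo (fun r hr => ?_))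
        rw [if_pos (by rcases hr with ⟨h1, h2⟩; nlinarith)]
    _ = ∫ r in Ioi (0:ℝ), (if r ^ 2 < 1 then (r / Real.sqrt (1 - r ^ 2)) * GG r else 0) := by
        refine (setIntegral_eq_of_subset_of_forall_diff_eq_zero measurableSet_Ioi
          (fun r hr => hr.1) (fun r hr => ?_)).symm
        rcases hr with ⟨h1, h2⟩
        have h3 : (1:ℝ) ≤ r := by
          simp only [mem_Ioo, not_and_or, not_lt] at h2
          rcases h2 with h | h
          · exact absurd (mem_Ioi.1 h1) (not_lt.2 h)
          · exact h
        rw [if_neg (not_lt.2 (by nlinarith))]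
    _ = ∫ r in Ioi (0:ℝ), (∫ θ in Ioo (-π) π, r • gg (polarCoord.symm (r, θ))) := by
        refine (setIntegral_congr_fun measurableSet_Ioi (fun r _ => ?_)).symm
        exact inner_eq r
    _ = ∫ p in polarCoord.target, p.1 • gg (polarCoord.symm p) := by
        rw [polarCoord_target] at hint ⊢
        rw [MeasureTheory.Measure.volume_eq_prod ℝ ℝ] at hint ⊢
        exact (setIntegral_prod _ hint).symm

lemma sub_sin (F : ℝ → ℝ) :
    ∫ r in Ioo (0:ℝ) 1, (r / Real.sqrt (1 - r ^ 2)) * F r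
      = ∫ t in Ioo 0 (π / 2), Real.sin t * F (Real.sin t) := by
  have himg : Real.sin '' Ioo 0 (π / 2) = Ioo 0 1 := img_sin
  have hinj : InjOn Real.sin (Ioo 0 (π / 2)) :=
    Real.injOn_sin.mono (fun t ht => mem_Icc.2 ⟨by linarith [ht.1, pi_pos], ht.2.le⟩)
  have := integral_image_eq_integral_abs_deriv_smul measurableSet_Ioo
    (fun t _ => (Real.hasDerivAt_sin t).hasDerivWithinAt) hinj
    (fun r => (r / Real.sqrt (1 - r ^ 2)) * F r)
  rw [himg] at this
  rw [this]
  refine setIntegral_congr_fun measurableSet_Ioo (fun t ht => ?_)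
  have hc : 0 < Real.cos t := Real.cos_pos_of_mem_Ioo ⟨by linarith [ht.1, pi_pos], ht.2⟩
  have hs : Real.sqrt (1 - Real.sin t ^ 2) = Real.cos t := by
    rw [← Real.cos_sq']; exact Real.sqrt_sq hc.le
  rw [smul_eq_mul, abs_of_pos hc, hs]
  field_simp

lemma CC : (∫ φ in (0:ℝ)..π, GG (Real.sin φ) * Real.sin φ)
    = 2 * ∫ t in Ioo (0:ℝ) (π / 2), Real.sin t * GG (Real.sin t) := by
  set J : ℝ → ℝ := fun φ => GG (Real.sin φ) * Real.sin φ with hJ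
  have hJc : Continuous J := (GG_cont.comp Real.continuous_sin).mul Real.continuous_sin
  have hsplit : (∫ φ in (0:ℝ)..π, J φ) = (∫ φ in (0:ℝ)..(π/2), J φ) + ∫ φ in (π/2)..π, J φ :=
    (intervalIntegral.integral_add_adjacent_intervals (hJc.intervalIntegrable _ _)
      (hJc.intervalIntegrable _ _)).symm
  have hrefl : (∫ φ in (π/2)..π, J φ) = ∫ φ in (0:ℝ)..(π/2), J φ := by
    have := intervalIntegral.integral_comp_sub_left (a := 0) (b := π/2) J π
    rw [show π - π/2 = π/2 by ring, sub_zero] at this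
    rw [← this]
    apply intervalIntegral.integral_congr
    intro φ _
    simp only [hJ, Real.sin_pi_sub]
  have hIoo : (∫ φ in (0:ℝ)..(π/2), J φ) = ∫ t in Ioo (0:ℝ) (π/2), Real.sin t * GG (Real.sin t) := by
    rw [intervalIntegral.integral_of_le (by linarith [pi_pos]),
      MeasureTheory.integral_Ioc_eq_integral_Ioo]
    exact setIntegral_congr_fun measurableSet_Ioo (fun t _ => mul_comm _ _)
  rw [hsplit, hrefl, hIoo]; ring

lemma R2 : (∫ u in Ioo (0:ℝ) 1, hh u)
    = ∫ t in Ioo (0:ℝ) (π / 2), Real.sin t * arctan ((4 / 3) * Real.sin t) ^ 2 := by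
  have hinj : InjOn Real.cos (Ioo 0 (π / 2)) :=
    Real.injOn_cos.mono (fun t ht => mem_Icc.2 ⟨ht.1.le, by linarith [ht.2, pi_pos]⟩)
  have := integral_image_eq_integral_abs_deriv_smul measurableSet_Ioo
    (fun t _ => (Real.hasDerivAt_cos t).hasDerivWithinAt) hinj hh
  rw [img_cos] at this
  rw [this]
  refine setIntegral_congr_fun measurableSet_Ioo (fun t ht => ?_)
  have hs : 0 < Real.sin t := Real.sin_pos_of_pos_of_lt_pi ht.1 (by linarith [ht.2, pi_pos])
  have h1 : Real.sqrt (1 - Real.cos t ^ 2) = Real.sin t := by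
    rw [← Real.sin_sq]; exact Real.sqrt_sq hs.le
  simp only [hh, smul_eq_mul, h1, abs_neg, abs_of_pos hs]

/-- For `(θ, φ)` uniform on the unit sphere,
`E(Ω²) = ∫₀¹ η·arctan((4/3)η)²/√(1-η²) dη` where
`Ω = arctan((4/3)√(1 - sin²θ sin²φ))`. -/
theorem sphere_keyhole_second_moment :
    (1 / (4 * π)) *
        ∫ φ in (0 : ℝ)..π, (∫ θ in (0 : ℝ)..(2 * π),
          arctan ((4 / 3) * Real.sqrt (1 - Real.sin θ ^ 2 * Real.sin φ ^ 2)) ^ 2) *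
          Real.sin φ =
      ∫ η in (0 : ℝ)..1, η * arctan ((4 / 3) * η) ^ 2 / Real.sqrt (1 - η ^ 2) := by
  have polar_step2 : (∫ r in Ioo (0:ℝ) 1, (r / Real.sqrt (1 - r ^ 2)) * GG r)
      = π * ∫ y in Ioo (-1:ℝ) 1, hh y := by rw [polar_step, gg_val]
  -- LHS inner integral
  have hA : ∀ φ : ℝ, (∫ θ in (0 : ℝ)..(2 * π),
      arctan ((4 / 3) * Real.sqrt (1 - Real.sin θ ^ 2 * Real.sin φ ^ 2)) ^ 2) = GG (Real.sin φ) := by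
    intro φ
    rw [← L1 (Real.sin φ)]
    apply intervalIntegral.integral_congr
    intro θ _
    simp only [hh, mul_pow]
  have hL : (∫ φ in (0 : ℝ)..π, (∫ θ in (0 : ℝ)..(2 * π),
      arctan ((4 / 3) * Real.sqrt (1 - Real.sin θ ^ 2 * Real.sin φ ^ 2)) ^ 2) * Real.sin φ)
      = ∫ φ in (0 : ℝ)..π, GG (Real.sin φ) * Real.sin φ := by
    apply intervalIntegral.integral_congr
    intro φ _
    simp only []
    rw [hA φ]
  -- RHS
  have hR : (∫ η in (0 : ℝ)..1, η * arctan ((4 / 3) * η) ^ 2 / Real.sqrt (1 - η ^ 2))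
      = ∫ u in Ioo (0:ℝ) 1, hh u := by
    rw [intervalIntegral.integral_of_le (by norm_num),
      MeasureTheory.integral_Ioc_eq_integral_Ioo]
    have h1 : (∫ η in Ioo (0:ℝ) 1, η * arctan ((4 / 3) * η) ^ 2 / Real.sqrt (1 - η ^ 2))
        = ∫ η in Ioo (0:ℝ) 1, (η / Real.sqrt (1 - η ^ 2)) * arctan ((4 / 3) * η) ^ 2 :=
      setIntegral_congr_fun measurableSet_Ioo (fun η _ => by ring)
    rw [h1, sub_sin (fun η => arctan ((4 / 3) * η) ^ 2), R2]
  rw [hL, hR, CC, ← sub_sin GG, polar_step2, even_split]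
  have hπ : π ≠ 0 := Real.pi_ne_zero
  field_simp
  ring
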